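/- Let λ > 0 and λ_e > 0 be real numbers and set ρ = λ_e/λ. For each positive integer n, the binary freshness of a node in a disconnected n-node gossip network is F(n) = 1/(1 + nρ). Then F(n) tends to 0 as n → ∞, and n·F(n) tends to 1/ρ as n → ∞; i.e., the freshness decreases to 0 at rate (1/ρ)·n^{-1}. -/

import Mathlib

/-- In a disconnected n-node gossip network (source self-update rate `lam_e`,
source-to-node rate `lam/n`), the single-node binary freshness
`F n = 1/(1 + n*ρ)` with `ρ = lam_e/lam` tends to 0, and `n * F n → 1/ρ`;
i.e., the freshness decreases to 0 at rate `(1/ρ) * n⁻¹`. -/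
theorem disconnected_freshness_scaling
    (lam lam_e : ℝ) (hlam : 0 < lam) (hlam_e : 0 < lam_e)
    (ρ : ℝ) (hρ : ρ = lam_e / lam)
    (F : ℕ → ℝ) (hF : ∀ n : ℕ, 0 < n → F n = 1 / (1 + (n : ℝ) * ρ)) :
    Filter.Tendsto F Filter.atTop (nhds 0) ∧
    Filter.Tendsto (fun n : ℕ => (n : ℝ) * F n) Filter.atTop (nhds (1 / ρ)) := by
  have hρpos : 0 < ρ := by rw [hρ]; positivity
  have hev : ∀ᶠ n : ℕ in Filter.atTop, F n = 1 / (1 + (n : ℝ) * ρ) := by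
    filter_upwards [Filter.eventually_gt_atTop 0] with n hn using hF n hn
  have hden : Filter.Tendsto (fun n : ℕ => 1 + (n : ℝ) * ρ) Filter.atTop Filter.atTop := by
    apply Filter.tendsto_atTop_add_const_left
    exact Filter.Tendsto.atTop_mul_const hρpos tendsto_natCast_atTop_atTop
  constructor
  · apply Filter.Tendsto.congr' (hev.mono fun n h => h.symm)
    simpa [one_div, Pi.inv_def] using hden.inv_tendsto_atTop
  · have hinv : Filter.Tendsto (fun n : ℕ => ((n : ℝ)⁻¹ + ρ)⁻¹) Filter.atTop
        (nhds (1 / ρ)) := by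
      have h1 : Filter.Tendsto (fun n : ℕ => (n : ℝ)⁻¹ + ρ) Filter.atTop (nhds (0 + ρ)) :=
        (tendsto_inv_atTop_nhds_zero_nat).add tendsto_const_nhds
      rw [zero_add] at h1
      simpa [one_div] using h1.inv₀ hρpos.ne'
    apply Filter.Tendsto.congr' _ hinv
    filter_upwards [Filter.eventually_gt_atTop 0] with n hn
    have hn' : (0:ℝ) < n := by exact_mod_cast hn
    have hd : (0:ℝ) < 1 + (n : ℝ) * ρ := by positivity
    rw [hF n hn]
    field_simp
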